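/- Let A_c, B_c, C_c, D_c ∈ M(n,ℂ) and define A_r = (1/2)(A_c − D_c + B_c − C_c), B_r = (1/(2i))(A_c + D_c − B_c − C_c), C_r = (1/(2i))(A_c + D_c + B_c + C_c), D_r = (1/2)(−A_c + D_c + B_c − C_c). Let v : ℝ → M(n,ℂ) be differentiable with v(t) symmetric and v(t) + i·1_n invertible for all t, and set W(t) = (v(t) − i·1_n)(v(t) + i·1_n)⁻¹. If W satisfies the matrix Riccati equation W′ = A_cW + W D_c + B_c + W C_c W, then v satisfies the matrix Riccati equation v′ = A_r v + v D_r + B_r + v C_r v. (Thus the Cayley transform carries the Riccati equation of motion on the Siegel ball into the Riccati equation of motion on the Siegel upper half plane.) -/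

import Mathlib

open Matrix

attribute [local instance] Matrix.normedAddCommGroup Matrix.normedSpace

private lemma matDeriv_mul {n : ℕ} {f g : ℝ → Matrix (Fin n) (Fin n) ℂ}
    {f' g' : Matrix (Fin n) (Fin n) ℂ} {t : ℝ}
    (hf : HasDerivAt f f' t) (hg : HasDerivAt g g' t) :
    HasDerivAt (fun s => f s * g s) (f' * g t + f t * g') t := by
  have hfe : ∀ i j, HasDerivAt (fun s => f s i j) (f' i j) t := fun i j =>
    (hasDerivAt_pi.mp ((hasDerivAt_pi.mp hf) i)) j
  have hge : ∀ i j, HasDerivAt (fun s => g s i j) (g' i j) t := fun i j =>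
    (hasDerivAt_pi.mp ((hasDerivAt_pi.mp hg) i)) j
  refine hasDerivAt_pi.mpr ?_
  intro i
  rw [hasDerivAt_pi]
  intro j
  have key : HasDerivAt (fun s => ∑ k, f s i k * g s k j)
      (∑ k, (f' i k * g t k j + f t i k * g' k j)) t :=
    HasDerivAt.fun_sum fun k _ => (hfe i k).mul (hge k j)
  have heq : (fun s => (f s * g s) i j) = fun s => ∑ k, f s i k * g s k j := by
    funext s; simp [Matrix.mul_apply]
  rw [heq]
  convert key using 1
  show (f' * g t) i j + (f t * g') i j = _
  simp [Matrix.add_apply, Matrix.mul_apply, Finset.sum_add_distrib]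
  rfl

/-- The Cayley transform carries the matrix Riccati equation of motion on the
Siegel ball into the matrix Riccati equation on the Siegel upper half plane. -/
theorem stmt_18 (n : ℕ) (Ac Bc Cc Dc Ar Br Cr Dr : Matrix (Fin n) (Fin n) ℂ)
    (hAr : Ar = (1 / 2 : ℂ) • (Ac - Dc + Bc - Cc))
    (hBr : Br = ((2 * Complex.I)⁻¹) • (Ac + Dc - Bc - Cc))
    (hCr : Cr = ((2 * Complex.I)⁻¹) • (Ac + Dc + Bc + Cc))
    (hDr : Dr = (1 / 2 : ℂ) • (-Ac + Dc + Bc - Cc))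
    (v : ℝ → Matrix (Fin n) (Fin n) ℂ)
    (hdiff : Differentiable ℝ v)
    (hsym : ∀ t, (v t)ᵀ = v t)
    (hinv : ∀ t, IsUnit (v t + Complex.I • 1))
    (hW : ∀ t, HasDerivAt
        (fun s => (v s - Complex.I • 1) * (v s + Complex.I • 1)⁻¹)
        (Ac * ((v t - Complex.I • 1) * (v t + Complex.I • 1)⁻¹)
          + ((v t - Complex.I • 1) * (v t + Complex.I • 1)⁻¹) * Dc + Bc
          + ((v t - Complex.I • 1) * (v t + Complex.I • 1)⁻¹) * Cc
            * ((v t - Complex.I • 1) * (v t + Complex.I • 1)⁻¹)) t) :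
    ∀ t, HasDerivAt v (Ar * v t + v t * Dr + Br + v t * Cr * v t) t := by
  intro t
  have hv : HasDerivAt v (deriv v t) t := (hdiff t).hasDerivAt
  set v' : Matrix (Fin n) (Fin n) ℂ := deriv v t with hv'def
  set u : Matrix (Fin n) (Fin n) ℂ := v t + Complex.I • 1 with hu_def
  set w : Matrix (Fin n) (Fin n) ℂ := v t - Complex.I • 1 with hw_def
  set W : Matrix (Fin n) (Fin n) ℂ := w * u⁻¹ with hW_def
  set W' : Matrix (Fin n) (Fin n) ℂ := Ac * W + W * Dc + Bc + W * Cc * W with hW'_def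
  have hudet : IsUnit u.det := (Matrix.isUnit_iff_isUnit_det u).mp (hinv t)
  have hWu : W * u = w := by
    rw [hW_def]; exact Matrix.nonsing_inv_mul_cancel_right (A := u) (B := w) hudet
  have hJ : ∀ X : Matrix (Fin n) (Fin n) ℂ,
      (Complex.I • (1 : Matrix (Fin n) (Fin n) ℂ)) * X = X * (Complex.I • 1) := by
    intro X; simp [Matrix.smul_mul, Matrix.mul_smul]
  have hcomm : u * w = w * u := by
    rw [hu_def, hw_def]
    simp only [add_mul, mul_sub, sub_mul, mul_add]
    rw [hJ (v t)]
    abel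
  have huW : u * W = w := by
    rw [hW_def, ← mul_assoc, hcomm]
    exact Matrix.mul_nonsing_inv_cancel_right (A := u) (B := w) hudet
  have hquW : ∀ X : Matrix (Fin n) (Fin n) ℂ, u * (W * X) = w * X := by
    intro X; rw [← mul_assoc, huW]
  -- derivative of s ↦ v s + I•1 and s ↦ v s - I•1
  have hus : HasDerivAt (fun s => v s + Complex.I • 1) v' t := hv.add_const _
  have hvs : HasDerivAt (fun s => v s - Complex.I • 1) v' t := hv.sub_const _
  -- product rule for W(s) * u(s)
  have hprod : HasDerivAt
      (fun s => ((v s - Complex.I • 1) * (v s + Complex.I • 1)⁻¹) * (v s + Complex.I • 1))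
      (W' * u + W * v') t := matDeriv_mul (hW t) hus
  have hfun : (fun s => ((v s - Complex.I • 1) * (v s + Complex.I • 1)⁻¹) * (v s + Complex.I • 1))
      = fun s => v s - Complex.I • 1 := by
    funext s
    exact Matrix.nonsing_inv_mul_cancel_right _ _
      ((Matrix.isUnit_iff_isUnit_det _).mp (hinv s))
  rw [hfun] at hprod
  have huniq : v' = W' * u + W * v' := hvs.unique hprod
  -- extract v'
  have h2 : (2 * Complex.I) • v' = u * (W' * u) := by
    have huw : u - w = (2 * Complex.I) • 1 := by
      rw [hu_def, hw_def]
      rw [two_mul, add_smul]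
      abel
    calc (2 * Complex.I) • v' = ((2 * Complex.I) • (1 : Matrix (Fin n) (Fin n) ℂ)) * v' := by
          rw [Matrix.smul_mul, one_mul]
      _ = (u - w) * v' := by rw [huw]
      _ = u * v' - w * v' := by rw [sub_mul]
      _ = u * (W' * u + W * v') - w * v' := by rw [← huniq]
      _ = u * (W' * u) + u * (W * v') - w * v' := by rw [mul_add]
      _ = u * (W' * u) + w * v' - w * v' := by rw [hquW]
      _ = u * (W' * u) := by abel
  have hI2 : (2 * Complex.I) ≠ 0 := by
    simp [Complex.I_ne_zero]
  have hv'eq : v' = (2 * Complex.I)⁻¹ • (u * (W' * u)) := by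
    rw [← h2, smul_smul, inv_mul_cancel₀ hI2, one_smul]
  -- expand u * (W' * u)
  have hexp : u * (W' * u) = u * (Ac * w) + w * (Dc * u) + u * (Bc * u) + w * (Cc * w) := by
    rw [hW'_def]
    simp only [add_mul, mul_add, mul_assoc, hWu, hquW]
  rw [hexp] at hv'eq
  -- conclude
  have hfinal : Ar * v t + v t * Dr + Br + v t * Cr * v t = v' := by
    rw [hv'eq, hAr, hBr, hCr, hDr, hu_def, hw_def]
    simp only [_root_.mul_inv_rev, Complex.inv_I]
    simp only [mul_add, add_mul, mul_sub, sub_mul, smul_add, smul_sub,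
      Matrix.smul_mul, Matrix.mul_smul, smul_smul, mul_assoc, one_mul, mul_one,
      Complex.I_mul_I, mul_neg, neg_mul, smul_neg, neg_smul, neg_neg]
    match_scalars <;>
      first
      | ring1
      | linear_combination ((1 : ℂ) / 2) * Complex.I_sq
      | linear_combination (-(1 : ℂ) / 2) * Complex.I_sq
  exact hfinal ▸ hv
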